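/- Explicit solution of the Weyl function Cauchy problem: with M(t), N(t) as above (Ṁ = −(J₋)₁₁M, M(0) = M₀; Ṅ = (J₁₁ − (J₋)₁₁)N, N(0) = I₂, N(t) invertible), define T(t,z) = −∫₀ᵗ e^{−zs} M(s)⁻¹ N(s) ds + M₀⁻¹ R₀(z) and R(t,z) = e^{zt} M(t) T(t,z) N(t)⁻¹. Then R satisfies dR/dt = R·(z·I₂ − J₁₁) − I₂ + [R, (J₋)₁₁] and R(0,z) = R₀(z). -/

import Mathlib

private lemma matDeriv_mul {A B : ℝ → Matrix (Fin 2) (Fin 2) ℂ}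
    {A' B' : Matrix (Fin 2) (Fin 2) ℂ} {t : ℝ}
    (hA : ∀ i j, HasDerivAt (fun s => A s i j) (A' i j) t)
    (hB : ∀ i j, HasDerivAt (fun s => B s i j) (B' i j) t) (i j : Fin 2) :
    HasDerivAt (fun s => (A s * B s) i j) ((A' * B t + A t * B') i j) t := by
  have h : HasDerivAt (fun s => ∑ k, A s i k * B s k j)
      (∑ k : Fin 2, (A' i k * B t k j + A t i k * B' k j)) t :=
    HasDerivAt.fun_sum fun k _ => (hA i k).fun_mul (hB k j)
  simpa [Matrix.mul_apply, Matrix.add_apply, Finset.sum_add_distrib] using h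


/-- Explicit solution of the Weyl-function Cauchy problem:
`R(t,z) = e^{zt} M(t) T(t,z) N(t)⁻¹` with `T(t,z) = −∫₀ᵗ e^{−zs}M(s)⁻¹N(s) ds + M₀⁻¹R₀(z)`
satisfies `Ṙ = R(zI − J₁₁) − I + [R,(J₋)₁₁]` and `R(0,z) = R₀(z)`. -/
theorem stmt_8 (b₁ b₂ a₂ c₁ a₁ : ℝ → ℂ)
    (hb₁ : Continuous b₁) (hb₂ : Continuous b₂) (ha₂ : Continuous a₂) (hc₁ : Continuous c₁)
    (ha₁ : ∀ t, HasDerivAt a₁ (c₁ t) t)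
    (J₁₁ : ℝ → Matrix (Fin 2) (Fin 2) ℂ)
    (hJ₁₁ : ∀ t, J₁₁ t = !![b₁ t, a₂ t; c₁ t, b₂ t])
    (Jm : ℝ → Matrix (Fin 2) (Fin 2) ℂ)
    (hJm : ∀ t, Jm t = !![0, 0; c₁ t, 0])
    (M : ℝ → Matrix (Fin 2) (Fin 2) ℂ)
    (hM : ∀ t, M t = !![1, 0; -a₁ t, 1])
    (N : ℝ → Matrix (Fin 2) (Fin 2) ℂ)
    (hN0 : N 0 = 1) (hNinv : ∀ t, IsUnit (N t).det)
    (hN : ∀ (t : ℝ) (i j : Fin 2),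
      HasDerivAt (fun s => N s i j) (((J₁₁ t - Jm t) * N t) i j) t)
    (R₀ : ℂ → Matrix (Fin 2) (Fin 2) ℂ)
    (T : ℝ → ℂ → Matrix (Fin 2) (Fin 2) ℂ)
    (hT : ∀ (t : ℝ) (z : ℂ), T t z =
      (Matrix.of fun i j : Fin 2 =>
        -(∫ s in (0:ℝ)..t, Complex.exp (-(z * s)) * ((M s)⁻¹ * N s) i j)) +
      (M 0)⁻¹ * R₀ z)
    (R : ℝ → ℂ → Matrix (Fin 2) (Fin 2) ℂ)
    (hR : ∀ (t : ℝ) (z : ℂ), R t z = Complex.exp (z * t) • (M t * T t z * (N t)⁻¹)) :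
    ∀ z : ℂ, R 0 z = R₀ z ∧
      ∀ (t : ℝ) (i j : Fin 2),
        HasDerivAt (fun s => R s z i j)
          ((R t z * (z • (1 : Matrix (Fin 2) (Fin 2) ℂ) - J₁₁ t) -
              (1 : Matrix (Fin 2) (Fin 2) ℂ) +
            (R t z * Jm t - Jm t * R t z)) i j) t := by
  have ha₁c : Continuous a₁ := by
    rw [continuous_iff_continuousAt]; exact fun t => (ha₁ t).continuousAt
  have hMinv : ∀ s, (M s)⁻¹ = !![1, 0; a₁ s, 1] := by
    intro s
    apply Matrix.inv_eq_right_inv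
    rw [hM, Matrix.mul_fin_two, Matrix.one_fin_two]
    norm_num
  have hMM : ∀ s, M s * (M s)⁻¹ = 1 := by
    intro s
    rw [hMinv, hM, Matrix.mul_fin_two, Matrix.one_fin_two]
    norm_num
  have hNN : ∀ s, N s * (N s)⁻¹ = 1 := fun s => Matrix.mul_nonsing_inv _ (hNinv s)
  have hNNl : ∀ s, (N s)⁻¹ * N s = 1 := fun s => Matrix.nonsing_inv_mul _ (hNinv s)
  have hNc : ∀ i j, Continuous fun s => N s i j := by
    intro i j; rw [continuous_iff_continuousAt]; exact fun s => (hN s i j).continuousAt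
  intro z
  constructor
  · have h0 : (Matrix.of fun i j : Fin 2 =>
        -(∫ s in (0:ℝ)..(0:ℝ), Complex.exp (-(z * s)) * ((M s)⁻¹ * N s) i j))
        = (0 : Matrix (Fin 2) (Fin 2) ℂ) := by
      ext i j; simp
    rw [hR, hT, h0, zero_add, hN0, inv_one, Matrix.mul_one, ← Matrix.mul_assoc, hMM 0,
      Matrix.one_mul]
    simp
  · intro t i j
    have hee : Complex.exp (z * t) * Complex.exp (-(z * t)) = 1 := by
      rw [← Complex.exp_add]; simp
    -- derivative of entries of T
    have hTd : ∀ i j, HasDerivAt (fun s => T s z i j)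
        (((-Complex.exp (-(z * t))) • ((M t)⁻¹ * N t)) i j) t := by
      intro i j
      have hfc : Continuous fun s : ℝ => Complex.exp (-(z * s)) * ((M s)⁻¹ * N s) i j := by
        apply Continuous.mul
        · exact Complex.continuous_exp.comp (continuous_const.mul Complex.continuous_ofReal).neg
        · have hrw : (fun s : ℝ => ((M s)⁻¹ * N s) i j)
              = fun s => ∑ k, (M s)⁻¹ i k * N s k j := by
            funext s; rw [Matrix.mul_apply]
          rw [hrw]
          apply continuous_finset_sum
          intro k _
          apply Continuous.mul
          · have : (fun s => (M s)⁻¹ i k) = fun s => !![(1:ℂ), 0; a₁ s, 1] i k := by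
              funext s; rw [hMinv]
            rw [this]
            fin_cases i <;> fin_cases k <;> simp <;>
              first | exact continuous_const | exact ha₁c
          · exact hNc k j
      have hint : HasDerivAt
          (fun u => ∫ s in (0:ℝ)..u, Complex.exp (-(z * s)) * ((M s)⁻¹ * N s) i j)
          (Complex.exp (-(z * t)) * ((M t)⁻¹ * N t) i j) t :=
        intervalIntegral.integral_hasDerivAt_right (hfc.intervalIntegrable _ _)
          hfc.aestronglyMeasurable.stronglyMeasurableAtFilter hfc.continuousAt
      have h := hint.neg.add_const (((M 0)⁻¹ * R₀ z) i j)
      have hfun : (fun s => T s z i j)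
          = fun u => -(∫ s in (0:ℝ)..u, Complex.exp (-(z * s)) * ((M s)⁻¹ * N s) i j)
              + ((M 0)⁻¹ * R₀ z) i j := by
        funext u; rw [hT]; simp
      rw [hfun]
      simpa using h
    -- derivative of entries of M
    have hMd : ∀ i j, HasDerivAt (fun s => M s i j)
        ((!![0, 0; -c₁ t, 0] : Matrix (Fin 2) (Fin 2) ℂ) i j) t := by
      intro i j
      have hfun : (fun s => M s i j) = fun s => !![(1:ℂ), 0; -a₁ s, 1] i j := by
        funext s; rw [hM]
      rw [hfun]
      fin_cases i <;> fin_cases j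
      · simpa using hasDerivAt_const t (1:ℂ)
      · simpa using hasDerivAt_const t (0:ℂ)
      · simpa using (ha₁ t).fun_neg
      · simpa using hasDerivAt_const t (1:ℂ)
    have hM'eq : -(Jm t * M t) = (!![0, 0; -c₁ t, 0] : Matrix (Fin 2) (Fin 2) ℂ) := by
      rw [hJm, hM, Matrix.mul_fin_two]
      ext i j
      fin_cases i <;> fin_cases j <;> simp
    -- derivative of entries of N⁻¹
    obtain ⟨K, hK, hKeq⟩ : ∃ K : Matrix (Fin 2) (Fin 2) ℂ,
        (∀ i j, HasDerivAt (fun s => (N s)⁻¹ i j) (K i j) t) ∧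
          K = -((N t)⁻¹ * (J₁₁ t - Jm t)) := by
      have hd0 : (N t).det ≠ 0 := (hNinv t).ne_zero
      have hdet : HasDerivAt (fun s => (N s).det)
          (((J₁₁ t - Jm t) * N t) 0 0 * N t 1 1 + N t 0 0 * ((J₁₁ t - Jm t) * N t) 1 1
            - (((J₁₁ t - Jm t) * N t) 0 1 * N t 1 0
              + N t 0 1 * ((J₁₁ t - Jm t) * N t) 1 0)) t := by
        have hfun : (fun s => (N s).det)
            = fun s => N s 0 0 * N s 1 1 - N s 0 1 * N s 1 0 := by
          funext s; rw [Matrix.det_fin_two]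
        rw [hfun]
        exact ((hN t 0 0).mul (hN t 1 1)).sub ((hN t 0 1).mul (hN t 1 0))
      have hadj : ∀ i j, HasDerivAt (fun s => (N s).adjugate i j)
          (((J₁₁ t - Jm t) * N t).adjugate i j) t := by
        intro i j
        have hfun : (fun s => (N s).adjugate i j)
            = fun s => !![N s 1 1, -(N s 0 1); -(N s 1 0), N s 0 0] i j := by
          funext s; rw [Matrix.adjugate_fin_two]
        rw [hfun, Matrix.adjugate_fin_two ((J₁₁ t - Jm t) * N t)]
        fin_cases i <;> fin_cases j
        · simpa using hN t 1 1
        · simpa using (hN t 0 1).fun_neg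
        · simpa using (hN t 1 0).fun_neg
        · simpa using hN t 0 0
      set D : ℂ := ((J₁₁ t - Jm t) * N t) 0 0 * N t 1 1 + N t 0 0 * ((J₁₁ t - Jm t) * N t) 1 1
            - (((J₁₁ t - Jm t) * N t) 0 1 * N t 1 0
              + N t 0 1 * ((J₁₁ t - Jm t) * N t) 1 0) with hD
      set W : Matrix (Fin 2) (Fin 2) ℂ := Matrix.of fun i j =>
          (-D / (N t).det ^ 2) * (N t).adjugate i j
          + ((N t).det)⁻¹ * ((J₁₁ t - Jm t) * N t).adjugate i j with hW
      have hK0 : ∀ i j, HasDerivAt (fun s => (N s)⁻¹ i j) (W i j) t := by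
        intro i j
        have hfun : (fun s => (N s)⁻¹ i j)
            = fun s => ((N s).det)⁻¹ * (N s).adjugate i j := by
          funext s
          rw [Matrix.inv_def, Matrix.smul_apply, Ring.inverse_eq_inv, smul_eq_mul]
        rw [hfun]
        have hdinv : HasDerivAt (fun s => ((N s).det)⁻¹) (-D / (N t).det ^ 2) t := by
          have h := (hasDerivAt_const t (1:ℂ)).fun_div hdet hd0
          simpa [one_div, zero_mul, one_mul, zero_sub, neg_div] using h
        simpa [hW] using hdinv.fun_mul (hadj i j)
      refine ⟨W, hK0, ?_⟩
      have h0 : W * N t + (N t)⁻¹ * ((J₁₁ t - Jm t) * N t) = 0 := by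
        ext i j
        have h1 := matDeriv_mul hK0 (hN t) i j
        have h2 : (fun s => ((N s)⁻¹ * N s) i j)
            = fun _ => (1 : Matrix (Fin 2) (Fin 2) ℂ) i j := by
          funext s; rw [hNNl s]
        rw [h2] at h1
        have h3 := (hasDerivAt_const t ((1 : Matrix (Fin 2) (Fin 2) ℂ) i j)).unique h1
        simpa using h3.symm
      have hKN : W * N t = -((N t)⁻¹ * (J₁₁ t - Jm t) * N t) := by
        have h4 := eq_neg_of_add_eq_zero_left h0
        rw [h4, Matrix.mul_assoc]
      calc W = W * (N t * (N t)⁻¹) := by rw [hNN t, Matrix.mul_one]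
        _ = W * N t * (N t)⁻¹ := by rw [Matrix.mul_assoc]
        _ = -((N t)⁻¹ * (J₁₁ t - Jm t) * N t) * (N t)⁻¹ := by rw [hKN]
        _ = -((N t)⁻¹ * (J₁₁ t - Jm t)) := by
            rw [Matrix.neg_mul, Matrix.mul_assoc, hNN t, Matrix.mul_one]
    have hBd : ∀ i j, HasDerivAt (fun s => (M s * T s z * (N s)⁻¹) i j)
        (((!![0, 0; -c₁ t, 0] * T t z
            + M t * ((-Complex.exp (-(z * t))) • ((M t)⁻¹ * N t))) * (N t)⁻¹
          + (M t * T t z) * K) i j) t :=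
      fun i j => matDeriv_mul (fun i j => matDeriv_mul hMd hTd i j) hK i j
    have hE : HasDerivAt (fun s : ℝ => Complex.exp (z * s)) (z * Complex.exp (z * t)) t := by
      have hs : HasDerivAt (fun s : ℝ => (s : ℂ)) 1 t := by
        simpa using (hasDerivAt_id t).ofReal_comp
      have h := (hs.const_mul z).cexp
      simpa [mul_comm] using h
    have hRd : HasDerivAt (fun s => R s z i j)
        (z * Complex.exp (z * t) * (M t * T t z * (N t)⁻¹) i j
          + Complex.exp (z * t) * ((!![0, 0; -c₁ t, 0] * T t z
            + M t * ((-Complex.exp (-(z * t))) • ((M t)⁻¹ * N t))) * (N t)⁻¹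
          + (M t * T t z) * K) i j) t := by
      have hfun : (fun s => R s z i j)
          = fun s : ℝ => Complex.exp (z * (s:ℂ)) * (M s * T s z * (N s)⁻¹) i j := by
        funext s; rw [hR]; simp
      rw [hfun]
      exact hE.mul (hBd i j)
    have h1 : M t * ((-Complex.exp (-(z * t))) • ((M t)⁻¹ * N t)) * (N t)⁻¹
        = (-Complex.exp (-(z * t))) • (1 : Matrix (Fin 2) (Fin 2) ℂ) := by
      rw [Matrix.mul_smul, Matrix.smul_mul]
      congr 1
      rw [← Matrix.mul_assoc, hMM t, Matrix.one_mul, hNN t]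
    have h2 : -(Jm t * M t) * T t z * (N t)⁻¹
        = -(Jm t * (M t * T t z * (N t)⁻¹)) := by
      simp [Matrix.neg_mul, Matrix.mul_assoc]
    have h3 : (M t * T t z) * -((N t)⁻¹ * (J₁₁ t - Jm t))
        = -((M t * T t z * (N t)⁻¹) * (J₁₁ t - Jm t)) := by
      simp [Matrix.mul_neg, Matrix.mul_assoc]
    have key : (z * Complex.exp (z * t)) • (M t * T t z * (N t)⁻¹)
        + Complex.exp (z * t) • ((-(Jm t * M t) * T t z
            + M t * ((-Complex.exp (-(z * t))) • ((M t)⁻¹ * N t))) * (N t)⁻¹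
          + (M t * T t z) * -((N t)⁻¹ * (J₁₁ t - Jm t)))
        = R t z * (z • (1 : Matrix (Fin 2) (Fin 2) ℂ) - J₁₁ t)
            - (1 : Matrix (Fin 2) (Fin 2) ℂ) + (R t z * Jm t - Jm t * R t z) := by
      rw [Matrix.add_mul, h1, h2, h3, hR]
      simp only [smul_add, smul_neg, smul_smul, Matrix.mul_smul, Matrix.smul_mul,
        Matrix.mul_sub, Matrix.sub_mul, Matrix.mul_one, mul_neg, hee, neg_smul, one_smul]
      module
    have hval : (R t z * (z • (1 : Matrix (Fin 2) (Fin 2) ℂ) - J₁₁ t)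
            - (1 : Matrix (Fin 2) (Fin 2) ℂ) + (R t z * Jm t - Jm t * R t z)) i j
        = z * Complex.exp (z * t) * (M t * T t z * (N t)⁻¹) i j
          + Complex.exp (z * t) * ((!![0, 0; -c₁ t, 0] * T t z
            + M t * ((-Complex.exp (-(z * t))) • ((M t)⁻¹ * N t))) * (N t)⁻¹
          + (M t * T t z) * K) i j := by
      rw [hKeq, ← hM'eq, ← key]
      simp only [Matrix.add_apply, Matrix.smul_apply, Matrix.neg_apply, smul_eq_mul]
    rw [hval]
    exact hRd
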